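/- Suppose the type-conditional choice probabilities satisfy the IIA identity and the bound Σ_ℓ p(ℓ|m,w) ≤ 1/B with B ≥ 2. Fix an item ℓ', a belief state c ∈ Δ_M, a set w_a with fewer than k items, and a set w_b ⊇ w_a with k items (ℓ' ∉ w_b). Then Σ_m c(m)·p(ℓ'|m, w_a ∪ {ℓ'})·Σ_ℓ p(ℓ|m, w_a) ≤ Σ_m c(m)·p(ℓ'|m, w_b ∪ {ℓ'})·Σ_ℓ p(ℓ|m, w_b). -/

import Mathlib

open Finset


private lemma theta_step {L M : Type*} [Fintype L] [Fintype M] [DecidableEq L]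
    (p : L → M → Finset L → ℝ) (B : ℝ) (hB : 2 ≤ B)
    (h01 : ∀ (ℓ : L) (m : M) (w : Finset L), 0 ≤ p ℓ m w ∧ p ℓ m w ≤ 1)
    (hsupp : ∀ (ℓ : L) (m : M) (w : Finset L), ℓ ∉ w → p ℓ m w = 0)
    (hIIA : ∀ (m : M) (w : Finset L) (ℓ' : L), ℓ' ∉ w → ∀ ℓ ∈ w,
      p ℓ m w = p ℓ m (insert ℓ' w) + p ℓ' m (insert ℓ' w) * p ℓ m w)
    (hsum : ∀ (m : M) (w : Finset L), ∑ ℓ, p ℓ m w ≤ 1 / B)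
    (m : M) (ℓ' ℓb : L) (w : Finset L) (hℓ' : ℓ' ∉ w) (hℓb : ℓb ∉ w) (hne : ℓb ≠ ℓ') :
    p ℓ' m (insert ℓ' w) * (∑ ℓ, p ℓ m w)
      ≤ p ℓ' m (insert ℓ' (insert ℓb w)) * (∑ ℓ, p ℓ m (insert ℓb w)) := by
  set t := p ℓb m (insert ℓb w) with ht
  set S := ∑ ℓ, p ℓ m w with hS
  set q := p ℓ' m (insert ℓ' w) with hq
  set s := p ℓb m (insert ℓ' (insert ℓb w)) with hs
  set q' := p ℓ' m (insert ℓ' (insert ℓb w)) with hq'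
  -- Fact A : sum over insert ℓb w
  have hA : ∑ ℓ, p ℓ m (insert ℓb w) = t + (1 - t) * S := by
    have hpt : ∀ ℓ, p ℓ m (insert ℓb w)
        = (1 - t) * p ℓ m w + (if ℓ = ℓb then t else 0) := by
      intro ℓ
      by_cases hmem : ℓ ∈ w
      · have hne' : ℓ ≠ ℓb := fun h => hℓb (h ▸ hmem)
        have := hIIA m w ℓb hℓb ℓ hmem
        simp [hne']
        linarith
      · by_cases hlb : ℓ = ℓb
        · subst hlb
          have : p ℓ m w = 0 := hsupp _ _ _ hmem
          simp [this, ht]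
        · have h1 : p ℓ m (insert ℓb w) = 0 := by
            apply hsupp; simp [hlb, hmem]
          have h2 : p ℓ m w = 0 := hsupp _ _ _ hmem
          simp [h1, h2, hlb]
    rw [Finset.sum_congr rfl (fun ℓ _ => hpt ℓ)]
    rw [Finset.sum_add_distrib, ← Finset.mul_sum, Finset.sum_ite_eq' Finset.univ ℓb]
    simp [hS]
    ring
  -- Fact B : t = s + q' * t
  have hB2 : t = s + q' * t := by
    have hnotin : ℓ' ∉ insert ℓb w := by simp [hℓ', Ne.symm hne]
    exact hIIA m (insert ℓb w) ℓ' hnotin ℓb (Finset.mem_insert_self _ _)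
  -- Fact C : q = q' + s * q
  have hC : q = q' + s * q := by
    have hnotin : ℓb ∉ insert ℓ' w := by simp [hℓb, hne]
    have := hIIA m (insert ℓ' w) ℓb hnotin ℓ' (Finset.mem_insert_self _ _)
    rwa [Finset.insert_comm ℓb ℓ' w] at this
  -- bounds
  have hq0 : 0 ≤ q := (h01 _ _ _).1
  have hq'0 : 0 ≤ q' := (h01 _ _ _).1
  have hq'1 : q' ≤ 1 := (h01 _ _ _).2
  have ht0 : 0 ≤ t := (h01 _ _ _).1
  have ht1 : t ≤ 1 := (h01 _ _ _).2
  have hs0 : 0 ≤ s := (h01 _ _ _).1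
  have hS0 : 0 ≤ S := Finset.sum_nonneg fun ℓ _ => (h01 _ _ _).1
  have hT : t + (1 - t) * S ≤ 1 / 2 := by
    have h1 : ∑ ℓ, p ℓ m (insert ℓb w) ≤ 1 / B := hsum m _
    have h2 : 1 / B ≤ 1 / 2 := by
      apply one_div_le_one_div_of_le <;> linarith
    rw [hA] at h1; linarith
  -- s ≤ t
  have hst : s ≤ t := by nlinarith
  rw [hA]
  -- q' = (1 - s) * q from hC
  have hq'eq : q' = (1 - s) * q := by linarith [hC]
  rw [hq'eq]
  have hT0 : 0 ≤ t + (1 - t) * S := by nlinarith [mul_nonneg (by linarith : (0:ℝ) ≤ 1 - t) hS0]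
  have h2t : (t + (1 - t) * S) * (2 - t) ≤ 1 := by nlinarith
  have ht1' : (0:ℝ) ≤ 1 - t := by linarith
  have ht12 : t ≤ 1 / 2 := by nlinarith [mul_nonneg ht1' hS0]
  have hpos : (0:ℝ) < 1 - t := by linarith
  have h3 : S * (2 - t) * (1 - t) ≤ (1 - t) * (1 - t) := by nlinarith [h2t]
  have hS2 : S * (2 - t) ≤ 1 - t := by
    rw [← mul_le_mul_iff_of_pos_right hpos]; nlinarith [h3]
  have key : S ≤ (1 - t) * (t + (1 - t) * S) := by
    nlinarith [mul_nonneg ht0 (sub_nonneg.2 hS2)]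
  calc q * S ≤ q * ((1 - t) * (t + (1 - t) * S)) :=
        mul_le_mul_of_nonneg_left key hq0
    _ ≤ (1 - s) * q * (t + (1 - t) * S) := by
        nlinarith [mul_nonneg (mul_nonneg (sub_nonneg.2 hst) hq0) hT0]

private lemma theta_mono {L M : Type*} [Fintype L] [Fintype M] [DecidableEq L]
    (p : L → M → Finset L → ℝ) (B : ℝ) (hB : 2 ≤ B)
    (h01 : ∀ (ℓ : L) (m : M) (w : Finset L), 0 ≤ p ℓ m w ∧ p ℓ m w ≤ 1)
    (hsupp : ∀ (ℓ : L) (m : M) (w : Finset L), ℓ ∉ w → p ℓ m w = 0)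
    (hIIA : ∀ (m : M) (w : Finset L) (ℓ' : L), ℓ' ∉ w → ∀ ℓ ∈ w,
      p ℓ m w = p ℓ m (insert ℓ' w) + p ℓ' m (insert ℓ' w) * p ℓ m w)
    (hsum : ∀ (m : M) (w : Finset L), ∑ ℓ, p ℓ m w ≤ 1 / B)
    (m : M) (ℓ' : L) :
    ∀ (n : ℕ) (wa wb : Finset L), wa ⊆ wb → wb.card = wa.card + n → ℓ' ∉ wb →
      p ℓ' m (insert ℓ' wa) * (∑ ℓ, p ℓ m wa)
        ≤ p ℓ' m (insert ℓ' wb) * (∑ ℓ, p ℓ m wb) := by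
  intro n
  induction n with
  | zero =>
      intro wa wb hab hcard _
      have : wa = wb := Finset.eq_of_subset_of_card_le hab (by omega)
      subst this; exact le_refl _
  | succ n ih =>
      intro wa wb hab hcard hb
      have hss : wa ⊂ wb := Finset.ssubset_iff_subset_ne.2 ⟨hab, by
        intro h; subst h; omega⟩
      obtain ⟨ℓb, hbmem, hbna⟩ := Finset.exists_of_ssubset hss
      have hnea : ℓ' ∉ wa := fun h => hb (hab h)
      have hne : ℓb ≠ ℓ' := fun h => hb (h ▸ hbmem)
      have h1 := theta_step p B hB h01 hsupp hIIA hsum m ℓ' ℓb wa hnea hbna hne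
      have h2 : insert ℓb wa ⊆ wb := Finset.insert_subset hbmem hab
      have h3 : wb.card = (insert ℓb wa).card + n := by
        rw [Finset.card_insert_of_notMem hbna]; omega
      exact le_trans h1 (ih (insert ℓb wa) wb h2 h3 hb)

/-- Larger displayed sets incur a larger submodularity defect: for `w_a ⊆ w_b` with
`|w_a| < k`, `|w_b| = k`, under the IIA identity and the bound `Σ_ℓ p(ℓ|m,w) ≤ 1/B`
with `B ≥ 2`,
`Σ_m c(m) p(ℓ'|m, w_a ∪ {ℓ'}) Σ_ℓ p(ℓ|m, w_a) ≤ Σ_m c(m) p(ℓ'|m, w_b ∪ {ℓ'}) Σ_ℓ p(ℓ|m, w_b)`. -/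
theorem theta_bound {L M : Type*} [Fintype L] [Fintype M] [DecidableEq L]
    (p : L → M → Finset L → ℝ) (B : ℝ) (hB : 2 ≤ B)
    (h01 : ∀ (ℓ : L) (m : M) (w : Finset L), 0 ≤ p ℓ m w ∧ p ℓ m w ≤ 1)
    (hsupp : ∀ (ℓ : L) (m : M) (w : Finset L), ℓ ∉ w → p ℓ m w = 0)
    (hIIA : ∀ (m : M) (w : Finset L) (ℓ' : L), ℓ' ∉ w → ∀ ℓ ∈ w,
      p ℓ m w = p ℓ m (insert ℓ' w) + p ℓ' m (insert ℓ' w) * p ℓ m w)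
    (hsum : ∀ (m : M) (w : Finset L), ∑ ℓ, p ℓ m w ≤ 1 / B)
    (c : M → ℝ) (hc0 : ∀ m, 0 ≤ c m) (hc1 : ∑ m, c m = 1)
    (k : ℕ) (ℓ' : L) (wa wb : Finset L) (hab : wa ⊆ wb)
    (hwa : wa.card < k) (hwb : wb.card = k) (hℓ' : ℓ' ∉ wb) :
    ∑ m, c m * p ℓ' m (insert ℓ' wa) * (∑ ℓ, p ℓ m wa)
      ≤ ∑ m, c m * p ℓ' m (insert ℓ' wb) * (∑ ℓ, p ℓ m wb) := by
  apply Finset.sum_le_sum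
  intro m _
  have hcard : wa.card ≤ wb.card := Finset.card_le_card hab
  have hmono := theta_mono p B hB h01 hsupp hIIA hsum m ℓ'
    (wb.card - wa.card) wa wb hab (by omega) hℓ'
  rw [mul_assoc, mul_assoc]
  exact mul_le_mul_of_nonneg_left hmono (hc0 m)
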